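/- arXiv:1810.12998 — 3 statements merged into one kernel-verified Lean document; each statement's English description precedes it below -/
import Mathlib

section
/- Let k be a positive integer, X a topological space with S(2k)-cellularity at most κ (κ infinite), and let 𝒰 be a family of S(2k-1)-open subsets of X with fixed chains (writing U(k) for the first set of the chain of U). Then there exists a subfamily 𝒱 ⊆ 𝒰 with |𝒱| ≤ κ such that ⋃{U(k) : U ∈ 𝒰} ⊆ θ_{2k}(⋃{cl(V) : V ∈ 𝒱}). -/
open Cardinal Set

universe u

variable {X : Type u}

/-- `x` is S(n)-separated from `A`. -/
def SSep [TopologicalSpace X] : ℕ → X → Set X → Prop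
  | 0, x, A => x ∉ closure A
  | (n+1), x, A => ∃ U : ℕ → Set X, (∀ i ≤ n, IsOpen (U i)) ∧ x ∈ U 0 ∧
      (∀ i < n, closure (U i) ⊆ U (i+1)) ∧ closure (U n) ∩ A = ∅

/-- `X` is an S(n)-space. -/
def SSpace (n : ℕ) (X : Type u) [TopologicalSpace X] : Prop :=
  ∀ x y : X, x ≠ y → SSep n x {y}

/-- `U` is an S(2k-1)-neighborhood of `x` (for `k ≥ 1`). -/
def SOddNhd [TopologicalSpace X] (k : ℕ) (x : X) (U : Set X) : Prop :=
  ∃ V : ℕ → Set X, (∀ i < k, IsOpen (V i)) ∧ x ∈ V 0 ∧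
    (∀ i, i + 1 < k → closure (V i) ⊆ V (i+1)) ∧ V (k-1) ⊆ U

/-- `U` is an S(2k)-neighborhood of `x` (for `k ≥ 1`). -/
def SEvenNhd [TopologicalSpace X] (k : ℕ) (x : X) (U : Set X) : Prop :=
  ∃ V : ℕ → Set X, (∀ i < k, IsOpen (V i)) ∧ x ∈ V 0 ∧
    (∀ i, i + 1 < k → closure (V i) ⊆ V (i+1)) ∧ closure (V (k-1)) ⊆ U

/-- `U` is an open S(2k-1)-neighborhood of `x`. -/
def SOpenNhd [TopologicalSpace X] (k : ℕ) (x : X) (U : Set X) : Prop :=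
  IsOpen U ∧ SOddNhd k x U

/-- `U` is an S(2k-1)-open set. -/
def SOpen [TopologicalSpace X] (k : ℕ) (U : Set X) : Prop :=
  IsOpen U ∧ ∃ x, SOddNhd k x U

/-- The S(2k-1)-closure `θ_{2k-1}(A)`. -/
def thetaOdd [TopologicalSpace X] (k : ℕ) (A : Set X) : Set X :=
  {x | ∀ U : Set X, SOpenNhd k x U → (U ∩ A).Nonempty}

/-- The S(2k)-closure `θ_{2k}(A)`. -/
def thetaEven [TopologicalSpace X] (k : ℕ) (A : Set X) : Set X :=
  {x | ∀ U : Set X, SOpenNhd k x U → (closure U ∩ A).Nonempty}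

/-- `D` is S(2k-1)-discrete. -/
def SOddDiscrete [TopologicalSpace X] (k : ℕ) (D : Set X) : Prop :=
  ∀ x ∈ D, ∃ U : Set X, SOpenNhd k x U ∧ U ∩ D = {x}

/-- `D` is S(2k)-discrete. -/
def SEvenDiscrete [TopologicalSpace X] (k : ℕ) (D : Set X) : Prop :=
  ∀ x ∈ D, ∃ U : Set X, SOpenNhd k x U ∧ closure U ∩ D = {x}

/-- The S(2k-1)-spread `s_{2k-1}(X)`. -/
noncomputable def spreadOdd (k : ℕ) (X : Type u) [TopologicalSpace X] : Cardinal :=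
  (⨆ D : {D : Set X // SOddDiscrete k D}, #D.1) ⊔ Cardinal.aleph0

/-- The S(2k)-spread `s_{2k}(X)`. -/
noncomputable def spreadEven (k : ℕ) (X : Type u) [TopologicalSpace X] : Cardinal :=
  (⨆ D : {D : Set X // SEvenDiscrete k D}, #D.1) ⊔ Cardinal.aleph0

/-- The S(2k-1)-cellularity `c_{2k-1}(X)`. -/
noncomputable def cellOdd (k : ℕ) (X : Type u) [TopologicalSpace X] : Cardinal :=
  (⨆ F : {F : Set (Set X) // (∀ U ∈ F, SOpen k U ∧ U.Nonempty) ∧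
      (∀ U ∈ F, ∀ V ∈ F, U ≠ V → U ∩ V = ∅)}, #F.1) ⊔ Cardinal.aleph0

/-- The S(2k)-cellularity `c_{2k}(X)`. -/
noncomputable def cellEven (k : ℕ) (X : Type u) [TopologicalSpace X] : Cardinal :=
  (⨆ F : {F : Set (Set X) // (∀ U ∈ F, SOpen k U ∧ U.Nonempty) ∧
      (∀ U ∈ F, ∀ V ∈ F, U ≠ V → closure U ∩ closure V = ∅)}, #F.1) ⊔ Cardinal.aleph0

/-- The S(2k-1)-character `χ_{2k-1}(X)`. -/
noncomputable def charOdd (k : ℕ) (X : Type u) [TopologicalSpace X] : Cardinal :=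
  sInf {c | Cardinal.aleph0 ≤ c ∧ ∀ x : X, ∃ B : Set (Set X), #B ≤ c ∧
    (∀ U ∈ B, SOpenNhd k x U) ∧
    ∀ U : Set X, SOpenNhd k x U → ∃ V ∈ B, V ⊆ U}

/-- The S(2k)-character `χ_{2k}(X)`. -/
noncomputable def charEven (k : ℕ) (X : Type u) [TopologicalSpace X] : Cardinal :=
  sInf {c | Cardinal.aleph0 ≤ c ∧ ∀ x : X, ∃ B : Set (Set X), #B ≤ c ∧
    (∀ V ∈ B, IsClosed V ∧ SOddNhd k x V) ∧
    ∀ W : Set X, SOpenNhd k x W → ∃ V ∈ B, V ⊆ closure W}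

/-- The S(2k-1)-pseudocharacter `ψ_{2k-1}(X)`. -/
noncomputable def psiOdd (k : ℕ) (X : Type u) [TopologicalSpace X] : Cardinal :=
  sInf {c | Cardinal.aleph0 ≤ c ∧ ∀ x : X, ∃ B : Set (Set X), #B ≤ c ∧
    (∀ U ∈ B, SOpenNhd k x U) ∧ ⋂₀ B = {x}}

/-- The S(2k)-pseudocharacter `ψ_{2k}(X)`. -/
noncomputable def psiEven (k : ℕ) (X : Type u) [TopologicalSpace X] : Cardinal :=
  sInf {c | Cardinal.aleph0 ≤ c ∧ ∀ x : X, ∃ B : Set (Set X), #B ≤ c ∧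
    (∀ U ∈ B, SOpenNhd k x U) ∧ (⋂ U ∈ B, closure U) = {x}}

/-- The usual pseudocharacter `ψ(X)`. -/
noncomputable def psi (X : Type u) [TopologicalSpace X] : Cardinal :=
  sInf {c | Cardinal.aleph0 ≤ c ∧ ∀ x : X, ∃ B : Set (Set X), #B ≤ c ∧
    (∀ U ∈ B, IsOpen U) ∧ ⋂₀ B = {x}}

lemma chain_mono [TopologicalSpace X] {V : ℕ → Set X} (k : ℕ)
    (h : ∀ j, j + 1 < k → closure (V j) ⊆ V (j+1)) :
    ∀ j, j + 1 ≤ k → V 0 ⊆ V j := by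
  intro j hj
  induction j with
  | zero => exact subset_rfl
  | succ n ih =>
    exact (ih (by omega)).trans (subset_closure.trans (h n (by omega)))

theorem stmt5 (X : Type u) [TopologicalSpace X] (k : ℕ) (hk : 1 ≤ k)
    (κ : Cardinal) (hκ : Cardinal.aleph0 ≤ κ) (hc : cellEven k X ≤ κ)
    {ι : Type u} (U W : ι → Set X)
    (hU : ∀ i : ι, IsOpen (U i) ∧ ∃ V : ℕ → Set X, (∀ j < k, IsOpen (V j)) ∧
      (∀ j, j + 1 < k → closure (V j) ⊆ V (j+1)) ∧
      V 0 = W i ∧ (W i).Nonempty ∧ V (k-1) = U i) :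
    ∃ t : Set ι, #t ≤ κ ∧ (⋃ i : ι, W i) ⊆ thetaEven k (⋃ i ∈ t, closure (U i)) := by
  classical
  set S : Set (Set (Set X)) := {F | (∀ s ∈ F, (SOpen k s ∧ s.Nonempty) ∧ ∃ i, s ⊆ U i) ∧
      (∀ s ∈ F, ∀ T ∈ F, s ≠ T → closure s ∩ closure T = ∅)} with hS
  obtain ⟨M, hMmem, hMmax⟩ := zorn_subset S (by
    intro c hc hchain
    refine ⟨⋃₀ c, ⟨?_, ?_⟩, fun s hs => subset_sUnion_of_mem hs⟩
    · rintro s ⟨F, hF, hsF⟩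
      exact (hc hF).1 s hsF
    · rintro s ⟨F, hF, hsF⟩ T ⟨F', hF', hTF'⟩ hne
      rcases hchain.total hF hF' with h | h
      · exact (hc hF').2 s (h hsF) T hTF' hne
      · exact (hc hF).2 s hsF T (h hTF') hne)
  -- cardinality bound
  have hMF : (∀ s ∈ M, SOpen k s ∧ s.Nonempty) ∧
      (∀ s ∈ M, ∀ T ∈ M, s ≠ T → closure s ∩ closure T = ∅) :=
    ⟨fun s hs => (hMmem.1 s hs).1, hMmem.2⟩
  have hMcard : #M ≤ κ := by
    refine le_trans (le_trans ?_ le_sup_left) hc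
    exact le_ciSup (f := fun F : {F : Set (Set X) // (∀ U ∈ F, SOpen k U ∧ U.Nonempty) ∧
        (∀ U ∈ F, ∀ V ∈ F, U ≠ V → closure U ∩ closure V = ∅)} => #F.1)
        (Cardinal.bddAbove_range _) ⟨M, hMF⟩
  -- pick indices
  have hidx : ∀ s : M, ∃ i, (s : Set X) ⊆ U i := fun s => (hMmem.1 s s.2).2
  choose f hf using hidx
  refine ⟨Set.range f, le_trans Cardinal.mk_range_le hMcard, ?_⟩
  intro x hx
  obtain ⟨i₀, hxW⟩ := mem_iUnion.mp hx
  intro G hG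
  obtain ⟨hGopen, V', hV'open, hxV', hV'chain, hV'sub⟩ := hG
  obtain ⟨hUopen, V, hVopen, hVchain, hV0, hWne, hVk⟩ := hU i₀
  by_contra hne
  rw [Set.not_nonempty_iff_eq_empty] at hne
  have hxV0 : x ∈ V 0 := hV0 ▸ hxW
  have hxU : x ∈ U i₀ := hVk ▸ chain_mono k hVchain (k-1) (by omega) hxV0
  have hxG : x ∈ G := hV'sub (chain_mono k hV'chain (k-1) (by omega) hxV')
  set G' := U i₀ ∩ G with hG'
  have hxG' : x ∈ G' := ⟨hxU, hxG⟩
  have hG'open : SOpen k G' := by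
    refine ⟨hUopen.inter hGopen, ?_⟩
    refine ⟨x, fun j => V j ∩ V' j, fun j hj => (hVopen j hj).inter (hV'open j hj),
      ⟨hxV0, hxV'⟩, fun j hj => ?_, ?_⟩
    · exact (closure_inter_subset_inter_closure _ _).trans
        (Set.inter_subset_inter (hVchain j hj) (hV'chain j hj))
    · exact Set.inter_subset_inter (hVk.le) hV'sub
  -- closure G disjoint from closures of all U i, i in range f
  have hclG : ∀ s : M, closure G' ∩ closure (s : Set X) = ∅ := by
    intro s
    rw [Set.eq_empty_iff_forall_notMem]
    rintro y ⟨hy1, hy2⟩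
    have hyG : y ∈ closure G := closure_mono Set.inter_subset_right hy1
    have hyA : y ∈ ⋃ i ∈ Set.range f, closure (U i) := by
      refine mem_biUnion ⟨s, rfl⟩ (closure_mono (hf s) hy2)
    exact Set.eq_empty_iff_forall_notMem.mp hne y ⟨hyG, hyA⟩
  have hins : insert G' M ∈ S := by
    constructor
    · rintro s (rfl | hs)
      · exact ⟨⟨hG'open, ⟨x, hxG'⟩⟩, ⟨i₀, Set.inter_subset_left⟩⟩
      · exact hMmem.1 s hs
    · rintro s (rfl | hs) T (rfl | hT) hne'
      · exact absurd rfl hne'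
      · exact hclG ⟨T, hT⟩
      · rw [Set.inter_comm]; exact hclG ⟨s, hs⟩
      · exact hMmem.2 s hs T hT hne'
  have : G' ∈ M := hMmax hins (Set.subset_insert _ _) (Set.mem_insert _ _)
  have := hclG ⟨G', this⟩
  exact Set.eq_empty_iff_forall_notMem.mp this x ⟨subset_closure hxG', subset_closure hxG'⟩
end

section
/- Let k be a positive integer, X a topological space with S(2k-1)-spread at most κ (κ infinite), C ⊆ X, and for each x ∈ C let U^x be an open S(2k-1)-neighborhood of x. Then there exists an S(2k-1)-discrete subset A of C with |A| ≤ κ such that C ⊆ θ_{2k-1}(A) ∪ ⋃{U^x : x ∈ A}. -/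
open Cardinal Set

universe u

variable {X : Type u}

lemma sOddNhd_mem [TopologicalSpace X] {k : ℕ} (hk : 1 ≤ k) {x : X} {U : Set X}
    (h : SOddNhd k x U) : x ∈ U := by
  obtain ⟨V, _hVo, hx0, hchain, hsub⟩ := h
  have key : ∀ i, i < k → x ∈ V i := by
    intro i
    induction i with
    | zero => intro _; exact hx0
    | succ n ih =>
      intro hn
      exact hchain n hn (subset_closure (ih (by omega)))
  exact hsub (key (k - 1) (by omega))

lemma SOpenNhd.inter' [TopologicalSpace X] {k : ℕ} {x : X} {U W : Set X}
    (hU : SOpenNhd k x U) (hW : SOpenNhd k x W) : SOpenNhd k x (U ∩ W) := by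
  obtain ⟨hUo, V, hVo, hx, hc, hsub⟩ := hU
  obtain ⟨hWo, V', hVo', hx', hc', hsub'⟩ := hW
  refine ⟨hUo.inter hWo, fun i => V i ∩ V' i, fun i hi => (hVo i hi).inter (hVo' i hi),
    ⟨hx, hx'⟩, fun i hi y hy => ?_, fun y hy => ⟨hsub hy.1, hsub' hy.2⟩⟩
  have h1 : closure (V i ∩ V' i) ⊆ closure (V i) ∩ closure (V' i) :=
    Set.subset_inter (closure_mono Set.inter_subset_left)
      (closure_mono Set.inter_subset_right)
  exact ⟨hc i hi (h1 hy).1, hc' i hi (h1 hy).2⟩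

theorem stmt9 (k : ℕ) (hk : 1 ≤ k) (X : Type u) [TopologicalSpace X]
    (κ : Cardinal) (hκ : Cardinal.aleph0 ≤ κ) (hs : spreadOdd k X ≤ κ)
    (C : Set X) (U : X → Set X) (hU : ∀ x ∈ C, SOpenNhd k x (U x)) :
    ∃ A : Set X, A ⊆ C ∧ SOddDiscrete k A ∧ #A ≤ κ ∧
      C ⊆ thetaOdd k A ∪ ⋃ x ∈ A, U x := by
  classical
  -- the family of "partial selections with witnesses"
  set T : Set (Set (X × Set X)) :=
    {s | ∀ p ∈ s, p.1 ∈ C ∧ SOpenNhd k p.1 p.2 ∧ p.2 ⊆ U p.1 ∧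
        ∀ q ∈ s, q.1 ∈ p.2 → q.1 = p.1} with hT
  have hzorn : ∃ m, (∅ : Set (X × Set X)) ⊆ m ∧ Maximal (· ∈ T) m := by
    apply zorn_subset_nonempty
    · intro c hc hchain _hne
      refine ⟨⋃₀ c, ?_, fun s hs => Set.subset_sUnion_of_mem hs⟩
      rintro p ⟨a, ha, hpa⟩
      obtain ⟨h1, h2, h3, h4⟩ := hc ha p hpa
      refine ⟨h1, h2, h3, ?_⟩
      rintro q ⟨b, hb, hqb⟩ hqp
      rcases hchain.total ha hb with hab | hba
      · exact hc hb p (hab hpa) |>.2.2.2 q hqb hqp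
      · exact h4 q (hba hqb) hqp
    · intro p hp; exact absurd hp (Set.notMem_empty p)
  obtain ⟨m, -, hmT, hmax⟩ := hzorn
  set A : Set X := Prod.fst '' m with hA
  have hAC : A ⊆ C := by
    rintro x ⟨p, hp, rfl⟩; exact (hmT p hp).1
  have hdisc : SOddDiscrete k A := by
    rintro x ⟨p, hp, rfl⟩
    obtain ⟨-, h2, -, h4⟩ := hmT p hp
    refine ⟨p.2, h2, ?_⟩
    apply Set.Subset.antisymm
    · rintro y ⟨hy1, q, hq, rfl⟩
      exact h4 q hq hy1
    · rintro y (rfl : y = p.1)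
      exact ⟨sOddNhd_mem hk h2.2, p, hp, rfl⟩
  have hcard : #A ≤ κ := by
    have h1 : #A ≤ ⨆ D : {D : Set X // SOddDiscrete k D}, #D.1 :=
      le_ciSup (Cardinal.bddAbove_range _) (⟨A, hdisc⟩ : {D : Set X // SOddDiscrete k D})
    calc #A ≤ spreadOdd k X := h1.trans le_sup_left
      _ ≤ κ := hs
  refine ⟨A, hAC, hdisc, hcard, ?_⟩
  intro y hyC
  by_contra hy
  simp only [Set.mem_union, Set.mem_iUnion, not_or, not_exists] at hy
  obtain ⟨hyθ, hyU⟩ := hy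
  have hW : ∃ W : Set X, SOpenNhd k y W ∧ W ∩ A = ∅ := by
    by_contra hcon
    push_neg at hcon
    exact hyθ hcon
  obtain ⟨W, hWn, hWA⟩ := hW
  set p : X × Set X := (y, W ∩ U y) with hp
  have hpn : SOpenNhd k y (W ∩ U y) := hWn.inter' (hU y hyC)
  have hnew : insert p m ∈ T := by
    rintro q (rfl | hq)
    · refine ⟨hyC, hpn, Set.inter_subset_right, ?_⟩
      rintro r (rfl | hr) _
      · rfl
      · exfalso
        rename_i hrp
        have : r.1 ∈ W ∩ A := ⟨hrp.1, r, hr, rfl⟩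
        rw [hWA] at this
        exact this
    · obtain ⟨h1, h2, h3, h4⟩ := hmT q hq
      refine ⟨h1, h2, h3, ?_⟩
      rintro r (rfl | hr) hrq
      · exact absurd (h3 hrq) (hyU q.1 ⟨q, hq, rfl⟩)
      · exact h4 r hr hrq
  have hpm : p ∈ m := by
    have := hmax hnew (Set.subset_insert p m)
    exact this (Set.mem_insert p m)
  have : y ∈ W ∩ A := ⟨sOddNhd_mem hk hWn.2, p, hpm, rfl⟩
  rw [hWA] at this
  exact this
end

section
/- Let k be a positive integer. If X is an S(k)-space, then |X| ≤ 2^{s_{2k}(X)·ψ_{2k}(X)}. -/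
open Cardinal Set

universe u

variable {X : Type u}

section ErdosRado

variable {A C : Type u}

theorem some_congr {α : Type*} {s t : Set α} (h : s = t) (hs : s.Nonempty) (ht : t.Nonempty) :
    hs.some = ht.some := by subst h; rfl

/-- The ramification sequence used in the proof of the Erdős–Rado theorem. -/
noncomputable def ERseq {W : Type u} [LinearOrder W] [WellFoundedLT W]
    (F : A → A → C) (a : A) : W → A :=
  WellFounded.fix wellFounded_lt (fun ξ ih =>
    Set.Nonempty.some (s := {y | y = a ∨ ∀ η (h : η < ξ),
      ih η h ≠ y ∧ F (ih η h) y = F (ih η h) a}) ⟨a, Or.inl rfl⟩)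

theorem ERseq_eq {W : Type u} [LinearOrder W] [WellFoundedLT W]
    (F : A → A → C) (a : A) (ξ : W) :
    ERseq F a ξ = Set.Nonempty.some (s := {y | y = a ∨ ∀ η (_ : η < ξ),
      ERseq F a η ≠ y ∧ F (ERseq F a η) y = F (ERseq F a η) a}) ⟨a, Or.inl rfl⟩ :=
  WellFounded.fix_eq _ _ _

theorem ERseq_spec {W : Type u} [LinearOrder W] [WellFoundedLT W]
    (F : A → A → C) (a : A) (ξ : W) :
    ERseq F a ξ = a ∨ ∀ η, η < ξ →
      ERseq F a η ≠ ERseq F a ξ ∧ F (ERseq F a η) (ERseq F a ξ) = F (ERseq F a η) a := by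
  have h := Set.Nonempty.some_mem (s := {y | y = a ∨ ∀ η (_ : η < ξ),
      ERseq F a η ≠ y ∧ F (ERseq F a η) y = F (ERseq F a η) a}) ⟨a, Or.inl rfl⟩
  rw [← ERseq_eq] at h
  simpa using h

theorem erdosRado (κ : Cardinal.{u}) (hκ : ℵ₀ ≤ κ) (hC : #C ≤ κ)
    (hA : 2 ^ κ < #A) (F : A → A → C) :
    ∃ (H : Set A) (c : C), κ < #H ∧
      ∀ a ∈ H, ∀ b ∈ H, a ≠ b → F a b = c ∨ F b a = c := by
  classical
  set W := (Order.succ κ).ord.ToType with hW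
  haveI : IsWellOrder W (· < ·) := ⟨⟩
  have hWcard : #W = Order.succ κ := Cardinal.mk_ord_toType _
  by_cases hterm : ∃ a : A, ∀ ξ : W, ERseq F a ξ ≠ a
  · -- good case : an end-homogeneous sequence of length κ⁺
    obtain ⟨a, ha⟩ := hterm
    set s : W → A := ERseq F a with hs
    have hend : ∀ {η ξ : W}, η < ξ → s η ≠ s ξ ∧ F (s η) (s ξ) = F (s η) a := by
      intro η ξ hηξ
      have := (ERseq_spec F a ξ).resolve_left (ha ξ)
      exact this η hηξ
    have hinj : Function.Injective s := by
      intro η ξ heq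
      rcases lt_trichotomy η ξ with h | h | h
      · exact absurd heq (hend h).1
      · exact h
      · exact absurd heq.symm (hend h).1
    set g : W → C := fun η => F (s η) a with hg
    have hfib : ∃ c : C, κ < #(g ⁻¹' {c}) := by
      by_contra hno
      push_neg at hno
      have huniv : (⋃ c : C, g ⁻¹' {c}) = Set.univ := by
        ext x; simp
      have h1 : #W ≤ κ := by
        calc #W = #(Set.univ : Set W) := Cardinal.mk_univ.symm
          _ = #(⋃ c : C, g ⁻¹' {c}) := by rw [huniv]
          _ ≤ Cardinal.sum fun c : C => #(g ⁻¹' {c}) := Cardinal.mk_iUnion_le_sum_mk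
          _ ≤ Cardinal.sum fun _ : C => κ := Cardinal.sum_le_sum _ _ fun c => hno c
          _ = #C * κ := Cardinal.sum_const' _ _
          _ ≤ κ * κ := mul_le_mul_left hC κ
          _ = κ := Cardinal.mul_eq_self hκ
      rw [hWcard] at h1
      exact absurd h1 (not_le.2 (Order.lt_succ κ))
    obtain ⟨c, hc⟩ := hfib
    refine ⟨s '' (g ⁻¹' {c}), c, ?_, ?_⟩
    · rwa [Cardinal.mk_image_eq_of_injOn s _ (hinj.injOn)]
    · rintro x ⟨η, hη, rfl⟩ y ⟨ξ, hξ, rfl⟩ hne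
      have hgη : g η = c := hη
      have hgξ : g ξ = c := hξ
      rcases lt_trichotomy η ξ with h | h | h
      · exact Or.inl (((hend h).2).trans hgη)
      · exact absurd (congrArg s h) hne
      · exact Or.inr (((hend h).2).trans hgξ)
  · -- counting case : every sequence terminates, giving an injection of A into a small set
    push_neg at hterm
    exfalso
    set K := κ.ord.ToType with hK
    have hKcard : #K = κ := Cardinal.mk_ord_toType _
    -- cardinality of initial segments of W
    have hIio : ∀ ρ : W, #(Set.Iio ρ) ≤ κ := by
      intro ρ
      have h1 : #{y : W // y < ρ} = (Ordinal.typein (· < ·) ρ).card :=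
        (Ordinal.card_typein ρ).symm
      have h2 : Ordinal.typein ((· < ·) : W → W → Prop) ρ < (Order.succ κ).ord := by
        have := Ordinal.typein_lt_type ((· < ·) : W → W → Prop) ρ
        rwa [Ordinal.type_toType] at this
      have h3 : (Ordinal.typein ((· < ·) : W → W → Prop) ρ).card < Order.succ κ :=
        Cardinal.lt_ord.mp h2
      have h4 : #{y : W // y < ρ} ≤ κ := by
        rw [h1]; exact Order.lt_succ_iff.mp h3
      exact h4
    -- surjections enumerating initial segments
    have he : ∀ ρ : W, ∃ e : K → Option W, ∀ η, η < ρ → ∃ i, e i = some η := by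
      intro ρ
      have h1 : #(Option (Set.Iio ρ)) ≤ κ := by
        rw [Cardinal.mk_option]
        calc #(Set.Iio ρ) + 1 ≤ κ + κ :=
              add_le_add (hIio ρ) (le_trans Cardinal.one_le_aleph0 hκ)
          _ = κ := Cardinal.add_eq_self hκ
      have h1' : #(Option (Set.Iio ρ)) ≤ #K := h1.trans_eq hKcard.symm
      obtain ⟨f⟩ := Cardinal.le_def _ _ |>.mp h1'
      have hsurj : Function.Surjective (Function.invFun f) :=
        Function.invFun_surjective f.injective
      refine ⟨fun i => (Function.invFun f i).map Subtype.val, ?_⟩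
      intro η hη
      obtain ⟨i, hi⟩ := hsurj (some ⟨η, hη⟩)
      refine ⟨i, ?_⟩
      simp only [hi]
      rfl
    choose e hee using he
    -- the termination ordinal
    have hne : ∀ a : A, {ξ : W | ERseq F a ξ = a}.Nonempty := by
      intro a
      obtain ⟨ξ, hξ⟩ := hterm a
      exact ⟨ξ, hξ⟩
    set ρ : A → W := fun a => wellFounded_lt.min {ξ : W | ERseq F a ξ = a} (hne a) with hρdef
    have hρ_mem : ∀ a : A, ERseq F a (ρ a) = a := fun a =>
      wellFounded_lt.min_mem {ξ : W | ERseq F a ξ = a} (hne a)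
    have hρ_min : ∀ a : A, ∀ η, η < ρ a → ERseq F a η ≠ a := by
      intro a η hη hcon
      exact wellFounded_lt.not_lt_min {ξ : W | ERseq F a ξ = a} hcon hη
    -- the injection
    set Φ : A → W × (K → Option C) := fun a =>
      (ρ a, fun i => (e (ρ a) i).map (fun η => F (ERseq F a η) a)) with hΦ
    have hΦinj : Function.Injective Φ := by
      intro a b hab
      have hρab : ρ a = ρ b := congrArg Prod.fst hab
      have hfun := congrArg Prod.snd hab
      simp only [hΦ] at hfun
      have key : ∀ η, η < ρ a → F (ERseq F a η) a = F (ERseq F b η) b := by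
        intro η hη
        obtain ⟨i, hi⟩ := hee (ρ a) η hη
        have h2 := congrFun hfun i
        rw [← hρab] at h2
        rw [hi] at h2
        simpa using h2
      have main : ∀ ξ : W, ξ ≤ ρ a → ERseq F a ξ = ERseq F b ξ := by
        intro ξ
        refine WellFounded.induction (C := fun ξ => ξ ≤ ρ a → ERseq F a ξ = ERseq F b ξ)
          wellFounded_lt ξ ?_
        intro ξ ih hξ
        have hseq : ∀ η, η < ξ → ERseq F a η = ERseq F b η := fun η hη =>
          ih η hη (le_of_lt (lt_of_lt_of_le hη hξ))
        have htr : ∀ η, η < ξ → F (ERseq F a η) a = F (ERseq F b η) b := fun η hη =>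
          key η (lt_of_lt_of_le hη hξ)
        have hnota : ∀ η, η < ξ → ERseq F a η ≠ a := fun η hη =>
          hρ_min a η (lt_of_lt_of_le hη hξ)
        have hnotb : ∀ η, η < ξ → ERseq F b η ≠ b := fun η hη => by
          have : η < ρ b := by rw [← hρab]; exact lt_of_lt_of_le hη hξ
          exact hρ_min b η this
        have hPQ : ∀ y : A, (∀ η (_ : η < ξ), ERseq F a η ≠ y ∧
            F (ERseq F a η) y = F (ERseq F a η) a) ↔
            (∀ η (_ : η < ξ), ERseq F b η ≠ y ∧
            F (ERseq F b η) y = F (ERseq F b η) b) := by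
          intro y
          constructor
          · intro hP η hη
            rw [← htr η hη, ← hseq η hη]
            exact hP η hη
          · intro hQ η hη
            rw [htr η hη, hseq η hη]
            exact hQ η hη
        have hsets : {y | y = a ∨ ∀ η (_ : η < ξ), ERseq F a η ≠ y ∧
              F (ERseq F a η) y = F (ERseq F a η) a}
            = {y | y = b ∨ ∀ η (_ : η < ξ), ERseq F b η ≠ y ∧
              F (ERseq F b η) y = F (ERseq F b η) b} := by
          ext y
          simp only [Set.mem_setOf_eq]
          constructor
          · rintro (rfl | hP)
            · refine Or.inr fun η hη => ⟨?_, ?_⟩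
              · intro hcon
                exact hnota η hη (by rw [hseq η hη]; exact hcon)
              · have h1 := htr η hη
                rw [hseq η hη] at h1
                exact h1
            · exact Or.inr ((hPQ y).mp hP)
          · rintro (rfl | hQ)
            · refine Or.inr fun η hη => ⟨?_, ?_⟩
              · intro hcon
                exact hnotb η hη (by rw [← hseq η hη]; exact hcon)
              · have h1 := htr η hη
                rw [← hseq η hη] at h1
                exact h1.symm
            · exact Or.inr ((hPQ y).mpr hQ)
        rw [ERseq_eq F a ξ, ERseq_eq F b ξ]
        exact some_congr hsets _ _
      have : a = b := by
        have h1 : ERseq F a (ρ a) = ERseq F b (ρ a) := main (ρ a) le_rfl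
        rw [hρ_mem a] at h1
        rw [hρab, hρ_mem b] at h1
        exact h1
      exact this
    -- cardinality computation
    have hbound : #A ≤ 2 ^ κ := by
      have h1 : #A ≤ #(W × (K → Option C)) := Cardinal.mk_le_of_injective hΦinj
      have h2 : #(W × (K → Option C)) = #W * #(K → Option C) := by
        rw [Cardinal.mk_prod, Cardinal.lift_id, Cardinal.lift_id]
      have h3 : #(K → Option C) = #(Option C) ^ κ := by
        rw [← Cardinal.power_def, hKcard]
      have h4 : #(Option C) ≤ 2 ^ κ := by
        rw [Cardinal.mk_option]
        calc #C + 1 ≤ κ + κ := add_le_add hC (le_trans Cardinal.one_le_aleph0 hκ)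
          _ = κ := Cardinal.add_eq_self hκ
          _ ≤ 2 ^ κ := le_of_lt (Cardinal.cantor κ)
      have h5 : #(Option C) ^ κ ≤ 2 ^ κ := by
        calc #(Option C) ^ κ ≤ (2 ^ κ) ^ κ := Cardinal.power_le_power_right h4
          _ = 2 ^ (κ * κ) := (Cardinal.power_mul).symm
          _ = 2 ^ κ := by rw [Cardinal.mul_eq_self hκ]
      calc #A ≤ #W * #(K → Option C) := h1.trans (le_of_eq h2)
        _ ≤ 2 ^ κ * (2 ^ κ) := by
            refine mul_le_mul' ?_ (h3 ▸ h5)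
            rw [hWcard]
            exact Order.succ_le_of_lt (Cardinal.cantor κ)
        _ = 2 ^ κ := Cardinal.mul_eq_self (hκ.trans (le_of_lt (Cardinal.cantor κ)))
    exact absurd hbound (not_le.2 hA)

end ErdosRado
section Topology

variable {X : Type u} [TopologicalSpace X]

theorem soddnhd_mem {k : ℕ} (hk : 1 ≤ k) {x : X} {U : Set X} (h : SOddNhd k x U) : x ∈ U := by
  obtain ⟨V, hV1, hV2, hV3, hV4⟩ := h
  have hmem : ∀ i, i < k → x ∈ V i := by
    intro i
    induction i with
    | zero => intro _; exact hV2
    | succ n ih =>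
      intro hn
      have hn' : n + 1 < k := hn
      have : x ∈ V n := ih (lt_trans (Nat.lt_succ_self n) hn)
      exact hV3 n hn' (subset_closure this)
  exact hV4 (hmem (k - 1) (Nat.sub_lt (lt_of_lt_of_le Nat.zero_lt_one hk) Nat.zero_lt_one))

theorem soddnhd_inter {k : ℕ} {x : X} {U U' : Set X}
    (h : SOddNhd k x U) (h' : SOddNhd k x U') : SOddNhd k x (U ∩ U') := by
  obtain ⟨V, hV1, hV2, hV3, hV4⟩ := h
  obtain ⟨V', hV1', hV2', hV3', hV4'⟩ := h'
  refine ⟨fun i => V i ∩ V' i, fun i hi => (hV1 i hi).inter (hV1' i hi), ⟨hV2, hV2'⟩,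
    fun i hi => ?_, Set.inter_subset_inter hV4 hV4'⟩
  intro z hz
  exact ⟨hV3 i hi (closure_mono Set.inter_subset_left hz),
    hV3' i hi (closure_mono Set.inter_subset_right hz)⟩

theorem sopennhd_inter {k : ℕ} {x : X} {U U' : Set X}
    (h : SOpenNhd k x U) (h' : SOpenNhd k x U') : SOpenNhd k x (U ∩ U') :=
  ⟨h.1.inter h'.1, soddnhd_inter h.2 h'.2⟩

/-- In an S(k)-space, distinct points are separated by an open S(2k-1)-neighborhood whose
closure misses the other point. -/
theorem sspace_sep {k : ℕ} (hk : 1 ≤ k) (h : SSpace k X) {x y : X} (hxy : x ≠ y) :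
    ∃ U : Set X, SOpenNhd k x U ∧ y ∉ closure U := by
  obtain ⟨n, rfl⟩ : ∃ n, k = n + 1 := ⟨k - 1, (Nat.succ_pred_eq_of_pos hk).symm⟩
  obtain ⟨U, hU1, hU2, hU3, hU4⟩ := h x y hxy
  refine ⟨U n, ⟨hU1 n le_rfl, ⟨U, fun i hi => hU1 i (Nat.lt_succ_iff.mp hi), hU2,
    fun i hi => hU3 i (Nat.succ_lt_succ_iff.mp hi), by simp⟩⟩, ?_⟩
  intro hy
  have : y ∈ closure (U n) ∩ {y} := ⟨hy, rfl⟩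
  rw [hU4] at this
  exact this

end Topology

theorem stmt12 (k : ℕ) (hk : 1 ≤ k) (X : Type u) [TopologicalSpace X]
    (h : SSpace k X) :
    #X ≤ 2 ^ (spreadEven k X * psiEven k X) := by
  classical
  set s := spreadEven k X with hs
  set p := psiEven k X with hp
  set c := s * p with hc
  have hsa : ℵ₀ ≤ s := le_sup_right
  -- trivial case
  by_cases hsub : Subsingleton X
  · have h1 : #X ≤ 1 := Cardinal.le_one_iff_subsingleton.mpr hsub
    refine h1.trans ?_
    rw [← Cardinal.power_zero (2 : Cardinal)]
    exact Cardinal.power_le_power_left (by norm_num) (Cardinal.zero_le _)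
  haveI hnt : Nontrivial X := not_subsingleton_iff_nontrivial.mp hsub
  -- the psi set is nonempty, so p is a member of it
  have hpmem : p ∈ {c | Cardinal.aleph0 ≤ c ∧ ∀ x : X, ∃ B : Set (Set X), #B ≤ c ∧
      (∀ U ∈ B, SOpenNhd k x U) ∧ (⋂ U ∈ B, closure U) = {x}} := by
    apply csInf_mem
    refine ⟨#X ⊔ ℵ₀, le_sup_right, ?_⟩
    intro x
    have hch : ∀ y : X, ∃ U : Set X, y ≠ x → SOpenNhd k x U ∧ y ∉ closure U := by
      intro y
      by_cases hy : y ≠ x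
      · obtain ⟨U, hU⟩ := sspace_sep hk h (Ne.symm hy)
        exact ⟨U, fun _ => hU⟩
      · exact ⟨∅, fun hc => absurd hc hy⟩
    choose g hg using hch
    refine ⟨g '' {y | y ≠ x}, ?_, ?_, ?_⟩
    · refine le_trans Cardinal.mk_image_le (le_trans ?_ le_sup_left)
      exact Cardinal.mk_subtype_le _
    · rintro U ⟨y, hy, rfl⟩
      exact (hg y hy).1
    · ext z
      simp only [Set.mem_iInter, Set.mem_singleton_iff]
      constructor
      · intro hz
        by_contra hzx
        exact (hg z hzx).2 (hz (g z) ⟨z, hzx, rfl⟩)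
      · rintro rfl U ⟨y, hy, rfl⟩
        exact subset_closure (soddnhd_mem hk (hg y hy).1.2)
  obtain ⟨hpa, hpfam⟩ := hpmem
  have hca : ℵ₀ ≤ c := hsa.trans (le_mul_right (ne_of_gt (lt_of_lt_of_le Cardinal.aleph0_pos hpa)))
  have hsc : s ≤ c := by
    rw [hc, Cardinal.mul_eq_max hsa hpa]; exact le_max_left _ _
  have hpc : p ≤ c := by
    rw [hc, Cardinal.mul_eq_max hsa hpa]; exact le_max_right _ _
  -- uniform families of neighborhoods indexed by a fixed type of cardinality c
  set T := c.out with hT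
  have hTcard : #T = c := Cardinal.mk_out c
  haveI : Nonempty T := by
    rw [← Cardinal.mk_ne_zero_iff, hTcard]
    exact ne_of_gt (lt_of_lt_of_le Cardinal.aleph0_pos hca)
  have hVex : ∀ x : X, ∃ V : T → Set X, (∀ t, SOpenNhd k x (V t)) ∧
      (⋂ t, closure (V t)) = {x} := by
    intro x
    obtain ⟨B, hB1, hB2, hB3⟩ := hpfam x
    have hBne : B.Nonempty := by
      rcases Set.eq_empty_or_nonempty B with rfl | hne
      · exfalso
        simp only [Set.mem_empty_iff_false, Set.iInter_of_empty, Set.iInter_univ] at hB3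
        obtain ⟨y, hy⟩ := exists_ne x
        have : y ∈ ({x} : Set X) := hB3 ▸ Set.mem_univ y
        exact hy this
      · exact hne
    haveI : Nonempty B := hBne.to_subtype
    have hBT : #B ≤ #T := by rw [hTcard]; exact hB1.trans hpc
    obtain ⟨f⟩ := Cardinal.le_def _ _ |>.mp hBT
    set g : T → B := Function.invFun ⇑f with hgdef
    have hsurj : Function.Surjective g :=
      Function.invFun_surjective f.injective
    refine ⟨fun t => ((g t : ↥B) : Set X), fun t => hB2 _ (g t).2, ?_⟩
    apply subset_antisymm
    · intro z hz
      rw [← hB3]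
      simp only [Set.mem_iInter]
      intro U hU
      obtain ⟨t, ht⟩ := hsurj ⟨U, hU⟩
      have h5 : z ∈ closure ((g t : ↥B) : Set X) := Set.mem_iInter.mp hz t
      rw [ht] at h5
      exact h5
    · intro z hz
      simp only [Set.mem_iInter]
      intro t
      rw [← hB3] at hz
      exact Set.mem_iInter.mp (Set.mem_iInter.mp hz _) (g t).2
  choose V hV1 hV2 using hVex
  -- the coloring
  have hFex : ∀ x y : X, x ≠ y → ∃ st : T × T,
      y ∉ closure (V x st.1) ∧ x ∉ closure (V y st.2) := by
    intro x y hxy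
    have h1 : y ∉ ⋂ t, closure (V x t) := by
      rw [hV2 x]; exact fun hcon => hxy (hcon.symm)
    have h2 : x ∉ ⋂ t, closure (V y t) := by
      rw [hV2 y]; exact fun hcon => hxy hcon
    simp only [Set.mem_iInter, not_forall] at h1 h2
    obtain ⟨t1, ht1⟩ := h1
    obtain ⟨t2, ht2⟩ := h2
    exact ⟨(t1, t2), ht1, ht2⟩
  set F : X → X → T × T := fun x y =>
    if hxy : x ≠ y then (hFex x y hxy).choose else Classical.arbitrary _ with hF
  have hFspec : ∀ x y : X, x ≠ y → y ∉ closure (V x (F x y).1) ∧ x ∉ closure (V y (F x y).2) := by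
    intro x y hxy
    simp only [hF, dif_pos hxy]
    exact (hFex x y hxy).choose_spec
  -- main argument by contradiction
  by_contra hbig
  rw [not_le] at hbig
  have hCcard : #(T × T) ≤ c := by
    rw [← Cardinal.mul_def, hTcard, Cardinal.mul_eq_self hca]
  obtain ⟨H, col, hH, hhom⟩ := erdosRado c hca hCcard hbig F
  -- H is S(2k)-discrete
  have hdisc : SEvenDiscrete k H := by
    intro x hx
    refine ⟨V x col.1 ∩ V x col.2, sopennhd_inter (hV1 x col.1) (hV1 x col.2), ?_⟩
    apply subset_antisymm
    · rintro z ⟨hz1, hz2⟩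
      by_contra hzx
      simp only [Set.mem_singleton_iff] at hzx
      have hxz : x ≠ z := fun hcon => hzx hcon.symm
      rcases hhom x hx z hz2 hxz with hcase | hcase
      · have := (hFspec x z hxz).1
        rw [hcase] at this
        exact this (closure_mono Set.inter_subset_left hz1)
      · have := (hFspec z x hxz.symm).2
        rw [hcase] at this
        exact this (closure_mono Set.inter_subset_right hz1)
    · rintro z hz
      simp only [Set.mem_singleton_iff] at hz
      subst hz
      refine ⟨subset_closure ?_, hx⟩
      exact ⟨soddnhd_mem hk (hV1 z col.1).2, soddnhd_mem hk (hV1 z col.2).2⟩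
  -- contradiction with the spread
  have hHs : #H ≤ s := by
    have h1 : #H ≤ ⨆ D : {D : Set X // SEvenDiscrete k D}, #D.1 :=
      le_ciSup (Cardinal.bddAbove_range _) (⟨H, hdisc⟩ : {D : Set X // SEvenDiscrete k D})
    exact h1.trans le_sup_left
  exact absurd (hH.trans_le (hHs.trans hsc)) (lt_irrefl c)
end
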